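/- Let A be a preadditive category, I an ideal of A, and X, Y objects with End(X), End(Y) local rings and 1_X ∉ I(X,X), 1_Y ∉ I(Y,Y). Then a morphism f : X → Y is a section in A if and only if its image f + I(X,Y) is a section in the quotient category A/I; similarly f is a retraction in A iff its image is a retraction in A/I, and f is an isomorphism in A iff its image is an isomorphism in A/I. -/

import Mathlib

open CategoryTheory CategoryTheory.Limits

/-- A two-sided ideal of a preadditive category: a family of subgroups of the
Hom-groups closed under composition on both sides. -/
structure CatIdeal (C : Type*) [Category C] [Preadditive C] where
  I : ∀ X Y : C, AddSubgroup (X ⟶ Y)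
  comp_right : ∀ {X Y Z : C} (f : X ⟶ Y), f ∈ I X Y → ∀ g : Y ⟶ Z, f ≫ g ∈ I X Z
  comp_left : ∀ {X Y Z : C} (f : Y ⟶ Z), f ∈ I Y Z → ∀ g : X ⟶ Y, g ≫ f ∈ I X Z

/-- The hom-relation identifying two morphisms when their difference lies in the
ideal; the quotient category `A/I` is the category-theoretic quotient by it. -/
def CatIdeal.rel {C : Type*} [Category C] [Preadditive C] (I : CatIdeal C) : HomRel C :=
  fun {X Y} f g => f - g ∈ I.I X Y

instance CatIdeal.congruence {C : Type*} [Category C] [Preadditive C] (I : CatIdeal C) :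
    Congruence I.rel where
  equivalence := by
    refine ⟨fun f => ?_, fun {f g} h => ?_, fun {f g h} h1 h2 => ?_⟩
    · simpa [CatIdeal.rel] using (I.I _ _).zero_mem
    · simpa [CatIdeal.rel] using (I.I _ _).neg_mem h
    · simpa [CatIdeal.rel, sub_add_sub_cancel] using (I.I _ _).add_mem h1 h2
  comp_left := by
    intro X Y Z f g g' h
    have := I.comp_left _ h f
    simpa [CatIdeal.rel, Preadditive.comp_sub] using this
  comp_right := by
    intro X Y Z f f' g h
    have := I.comp_right _ h g
    simpa [CatIdeal.rel, Preadditive.sub_comp] using this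

/-- If `e - 1` is in the ideal, `End Z` is local, and `𝟙 Z ∉ I(Z,Z)`, then `e` is a unit. -/
lemma CatIdeal.isUnit_of_sub_id_mem {C : Type*} [Category C] [Preadditive C] (I : CatIdeal C)
    {Z : C} (hl : IsLocalRing (End Z)) (hZ : 𝟙 Z ∉ I.I Z Z)
    (e : End Z) (he : (e - 1 : End Z) ∈ I.I Z Z) : IsUnit e := by
  have h1 : e + ((1 : End Z) - e) = 1 := by abel
  rcases hl.isUnit_or_isUnit_of_add_one h1 with h | h
  · exact h
  · exfalso
    obtain ⟨u, hu⟩ := h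
    have hmem : ((1 : End Z) - e) ∈ I.I Z Z := by
      have := (I.I Z Z).neg_mem he
      simpa [neg_sub] using this
    have key : (((1 : End Z) - e) ≫ (↑u⁻¹ : End Z) : Z ⟶ Z) ∈ I.I Z Z :=
      I.comp_right _ hmem _
    apply hZ
    have heq : (((1 : End Z) - e) ≫ (↑u⁻¹ : End Z) : Z ⟶ Z) = 𝟙 Z := by
      show (↑u⁻¹ : End Z) * ((1 : End Z) - e) = 1
      rw [← hu]; exact u.inv_mul
    rwa [heq] at key

/-- With `End X`, `End Y` local and the identities not in the ideal, a morphism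
is a section (resp. retraction, isomorphism) in `A` iff its image in `A/I` is. -/
theorem stmt_15 {C : Type*} [Category C] [Preadditive C] (I : CatIdeal C)
    {X Y : C} (hlX : IsLocalRing (End X)) (hlY : IsLocalRing (End Y))
    (hX : 𝟙 X ∉ I.I X X) (hY : 𝟙 Y ∉ I.I Y Y) (f : X ⟶ Y) :
    (IsSplitMono f ↔ IsSplitMono ((Quotient.functor I.rel).map f)) ∧
    (IsSplitEpi f ↔ IsSplitEpi ((Quotient.functor I.rel).map f)) ∧
    (IsIso f ↔ IsIso ((Quotient.functor I.rel).map f)) := by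
  have hmono : IsSplitMono ((Quotient.functor I.rel).map f) → IsSplitMono f := by
    intro h
    obtain ⟨r, hr⟩ := (Quotient.functor I.rel).map_surjective
      (retraction ((Quotient.functor I.rel).map f))
    have h2 : (Quotient.functor I.rel).map (f ≫ r) = (Quotient.functor I.rel).map (𝟙 X) := by
      simp [hr]
    rw [Quotient.functor_map_eq_iff] at h2
    have hu := I.isUnit_of_sub_id_mem hlX hX (f ≫ r) h2
    obtain ⟨u, hu⟩ := hu
    refine ⟨⟨r ≫ (↑u⁻¹ : End X), ?_⟩⟩
    rw [← Category.assoc, ← hu]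
    exact u.inv_mul
  have hepi : IsSplitEpi ((Quotient.functor I.rel).map f) → IsSplitEpi f := by
    intro h
    obtain ⟨s, hs⟩ := (Quotient.functor I.rel).map_surjective
      (section_ ((Quotient.functor I.rel).map f))
    have h2 : (Quotient.functor I.rel).map (s ≫ f) = (Quotient.functor I.rel).map (𝟙 Y) := by
      simp [hs]
    rw [Quotient.functor_map_eq_iff] at h2
    have hu := I.isUnit_of_sub_id_mem hlY hY (s ≫ f) h2
    obtain ⟨u, hu⟩ := hu
    refine ⟨⟨(↑u⁻¹ : End Y) ≫ s, ?_⟩⟩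
    rw [Category.assoc, ← hu]
    exact u.mul_inv
  refine ⟨⟨fun h => inferInstance, hmono⟩, ⟨fun h => inferInstance, hepi⟩,
    ⟨fun h => inferInstance, ?_⟩⟩
  intro h
  have h1 : IsSplitMono f := hmono inferInstance
  have h2 : IsSplitEpi f := hepi inferInstance
  exact isIso_of_mono_of_isSplitEpi f
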